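/- Let f : [a,b] → ℝ be strictly quasiconcave. Then there exists a unique m ∈ [a,b] such that either (f is strictly increasing on [a,m] and strictly decreasing on (m,b]) or (f is strictly increasing on [a,m) and strictly decreasing on [m,b]). -/
import Mathlib


open Set

/-- A strictly quasiconcave function on `[a,b]` admits a *unique* point `m`
splitting it into a strictly increasing and a strictly decreasing part. -/
theorem strict_quasiconcave_exists_unique_peak (a b : ℝ) (hab : a ≤ b) (f : ℝ → ℝ)
    (hqc : ∀ x ∈ Icc a b, ∀ x' ∈ Icc a b, x < x' → ∀ l ∈ Ioo (0:ℝ) 1,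
      min (f x) (f x') < f (l * x + (1 - l) * x')) :
    ∃! m : ℝ, m ∈ Icc a b ∧
      ((StrictMonoOn f (Icc a m) ∧ StrictAntiOn f (Ioc m b)) ∨
       (StrictMonoOn f (Ico a m) ∧ StrictAntiOn f (Icc m b))) := by
  -- three-point lemma
  have h3 : ∀ x y z : ℝ, x ∈ Icc a b → z ∈ Icc a b → x < y → y < z →
      min (f x) (f z) < f y := by
    intro x y z hx hz hxy hyz
    have hzx : (0:ℝ) < z - x := by linarith
    have hl : (z - y) / (z - x) ∈ Ioo (0:ℝ) 1 := by
      constructor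
      · exact div_pos (by linarith) hzx
      · rw [div_lt_one hzx]; linarith
    have := hqc x hx z hz (by linarith) _ hl
    have heq : (z - y) / (z - x) * x + (1 - (z - y) / (z - x)) * z = y := by
      field_simp
      ring
    rwa [heq] at this
  -- once f does not increase, it decreases strictly afterwards
  have hD : ∀ w x z : ℝ, w ∈ Icc a b → z ∈ Icc a b → w < x → x < z →
      f x ≤ f w → f z < f x := by
    intro w x z hw hz hwx hxz hfx
    have h := h3 w x z hw hz hwx hxz
    by_contra hc
    push_neg at hc
    have : f x ≤ min (f w) (f z) := le_min hfx hc
    linarith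
  -- the ascending predicate
  set P : ℝ → Prop := fun x => x ∈ Icc a b ∧ ∀ w ∈ Ico a x, f w < f x with hP
  have Pa : P a := ⟨⟨le_refl a, hab⟩, fun w hw => absurd hw.2 (not_lt.2 hw.1)⟩
  have mono : ∀ x y, x ∈ Icc a b → P y → x < y → f x < f y := by
    intro x y hx hy hxy
    exact hy.2 x ⟨hx.1, hxy⟩
  have anti : ∀ x y, x ∈ Icc a b → y ∈ Icc a b → ¬ P x → x < y → f y < f x := by
    intro x y hx hy hnp hxy
    have : ∃ w ∈ Ico a x, f x ≤ f w := by
      by_contra hc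
      push_neg at hc
      exact hnp ⟨hx, hc⟩
    obtain ⟨w, hw, hfw⟩ := this
    exact hD w x y ⟨hw.1, le_trans (le_of_lt hw.2) hx.2⟩ hy hw.2 hxy hfw
  have initial : ∀ x y, x ∈ Icc a b → P y → x < y → P x := by
    intro x y hx hy hxy
    by_contra hnp
    have h1 : f y < f x := anti x y hx hy.1 hnp hxy
    have : ∃ w ∈ Ico a x, f x ≤ f w := by
      by_contra hc
      push_neg at hc
      exact hnp ⟨hx, hc⟩
    obtain ⟨w, hw, hfw⟩ := this
    have h2 : f w < f y := hy.2 w ⟨hw.1, lt_trans hw.2 hxy⟩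
    linarith
  -- the supremum of the ascending set
  set C : Set ℝ := {x | P x} with hC
  have hCne : C.Nonempty := ⟨a, Pa⟩
  have hCbdd : BddAbove C := ⟨b, fun x hx => hx.1.2⟩
  set m : ℝ := sSup C with hm
  have hma : a ≤ m := le_csSup hCbdd Pa
  have hmb : m ≤ b := csSup_le hCne (fun x hx => hx.1.2)
  have hmI : m ∈ Icc a b := ⟨hma, hmb⟩
  have hCm : ∀ x, a ≤ x → x < m → P x := by
    intro x hax hxm
    obtain ⟨c, hc, hxc⟩ := exists_lt_of_lt_csSup hCne hxm
    exact initial x c ⟨hax, le_trans (le_of_lt hxm) hmb⟩ hc hxc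
  have hDm : ∀ x, m < x → x ≤ b → ¬ P x := by
    intro x hmx hxb hp
    exact absurd (le_csSup hCbdd hp) (not_le.2 hmx)
  -- the main existence statement
  have main : m ∈ Icc a b ∧
      ((StrictMonoOn f (Icc a m) ∧ StrictAntiOn f (Ioc m b)) ∨
       (StrictMonoOn f (Ico a m) ∧ StrictAntiOn f (Icc m b))) := by
    refine ⟨hmI, ?_⟩
    by_cases hPm : P m
    · left
      constructor
      · intro x hx y hy hxy
        have hPy : P y := by
          rcases eq_or_lt_of_le hy.2 with h | h
          · rwa [h]
          · exact hCm y hy.1 h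
        exact mono x y ⟨hx.1, le_trans hx.2 hmb⟩ hPy hxy
      · intro x hx y hy hxy
        have hx' : x ∈ Icc a b := ⟨le_trans hma (le_of_lt hx.1), hx.2⟩
        have hy' : y ∈ Icc a b := ⟨le_trans hma (le_of_lt hy.1), hy.2⟩
        exact anti x y hx' hy' (hDm x hx.1 hx.2) hxy
    · right
      constructor
      · intro x hx y hy hxy
        exact mono x y ⟨hx.1, le_trans (le_of_lt hx.2) hmb⟩ (hCm y (le_trans hx.1 (le_of_lt hxy)) hy.2) hxy
      · intro x hx y hy hxy
        have hx' : x ∈ Icc a b := ⟨le_trans hma hx.1, hx.2⟩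
        have hy' : y ∈ Icc a b := ⟨le_trans hma hy.1, hy.2⟩
        have hnpx : ¬ P x := by
          rcases eq_or_lt_of_le hx.1 with h | h
          · rwa [← h]
          · exact hDm x h hx.2
        exact anti x y hx' hy' hnpx hxy
  refine ⟨m, main, ?_⟩
  intro m' hm'
  obtain ⟨hm'I, hm'or⟩ := hm'
  rcases lt_trichotomy m' m with hlt | heq | hgt
  · exfalso
    set x := m' + (m - m') / 3 with hx
    set y := m' + 2 * (m - m') / 3 with hy
    have hm'x : m' < x := by rw [hx]; linarith
    have hxy : x < y := by rw [hx, hy]; linarith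
    have hym : y < m := by rw [hy]; linarith
    have hxI : x ∈ Icc a b := ⟨le_trans hm'I.1 (le_of_lt hm'x), le_trans (le_of_lt (lt_trans hxy hym)) hmb⟩
    have hPy : P y := hCm y (le_trans hm'I.1 (le_of_lt (lt_trans hm'x hxy))) hym
    have h1 : f x < f y := mono x y hxI hPy hxy
    have hxIoc : x ∈ Ioc m' b := ⟨hm'x, hxI.2⟩
    have hyIoc : y ∈ Ioc m' b := ⟨lt_trans hm'x hxy, le_trans (le_of_lt hym) hmb⟩
    rcases hm'or with ⟨_, hA⟩ | ⟨_, hA⟩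
    · exact absurd (hA hxIoc hyIoc hxy) (not_lt.2 (le_of_lt h1))
    · exact absurd (hA ⟨le_of_lt hxIoc.1, hxIoc.2⟩ ⟨le_of_lt hyIoc.1, hyIoc.2⟩ hxy)
        (not_lt.2 (le_of_lt h1))
  · exact heq
  · exfalso
    set x := m + (m' - m) / 3 with hx
    set y := m + 2 * (m' - m) / 3 with hy
    have hmx : m < x := by rw [hx]; linarith
    have hxy : x < y := by rw [hx, hy]; linarith
    have hym' : y < m' := by rw [hy]; linarith
    have hxI : x ∈ Icc a b := ⟨le_trans hma (le_of_lt hmx), le_trans (le_of_lt (lt_trans hxy hym')) hm'I.2⟩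
    have hyI : y ∈ Icc a b := ⟨le_trans hxI.1 (le_of_lt hxy), le_trans (le_of_lt hym') hm'I.2⟩
    have h1 : f y < f x := anti x y hxI hyI (hDm x hmx hxI.2) hxy
    have hxIco : x ∈ Ico a m' := ⟨hxI.1, lt_trans hxy hym'⟩
    have hyIco : y ∈ Ico a m' := ⟨hyI.1, hym'⟩
    rcases hm'or with ⟨hM, _⟩ | ⟨hM, _⟩
    · exact absurd (hM ⟨hxIco.1, le_of_lt hxIco.2⟩ ⟨hyIco.1, le_of_lt hyIco.2⟩ hxy)
        (not_lt.2 (le_of_lt h1))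
    · exact absurd (hM hxIco hyIco hxy) (not_lt.2 (le_of_lt h1))
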